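/- For every n ≥ 1 and 0 ≤ a ≤ n, the map d_{a,n} : V_a^n → (V_{n−a}^n)^* is U_q(sl_n)-equivariant: d_{a,n}(Z·v) = Z·d_{a,n}(v) for all Z ∈ U_q(sl_n) and v ∈ V_a^n, where (V_{n−a}^n)^* carries the antipode-twisted dual module structure. -/

import Mathlib

noncomputable section

open scoped TensorProduct

set_option maxHeartbeats 1000000
set_option synthInstance.maxHeartbeats 400000

/-- The ground field `𝔸 = ℚ(q)`. -/
abbrev A : Type := RatFunc ℚ

/-- The element `q ∈ 𝔸`. -/
def qq : A := RatFunc.X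

/-- The set of `a`-element subsets of `{0, 1, …, n-1}` (a model for the
`a`-element subsets of `{1, …, n}`), the basis of `V_a^n`. -/
abbrev BS (n a : ℕ) : Type := {s : Finset ℕ // s ⊆ Finset.range n ∧ s.card = a}

instance BS.fintype (n a : ℕ) : Fintype (BS n a) :=
  Fintype.subtype ((Finset.range n).powerset.filter fun s => s.card = a) (by
    intro s
    simp [Finset.mem_powerset, Finset.mem_filter])

/-- The fundamental representation `V_a^n`, as the `𝔸`-vector space with basis the
`a`-element subsets of an `n`-element set. -/
abbrev V (n a : ℕ) : Type := BS n a → A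

/-- `i₋₁ : V_{a-1}^{n-1} → V_a^n` (here with indices shifted:
`iminus n a : V_a^n → V_{a+1}^{n+1}`), the inclusion of the summand of subsets containing
the new top element `n`. -/
def iminus (n a : ℕ) : V n a →ₗ[A] V (n+1) (a+1) where
  toFun f s := if h : n ∈ s.1 then
      f ⟨s.1.erase n, by
        constructor
        · intro x hx
          have hx' := Finset.mem_erase.mp hx
          have hx2 := s.2.1 hx'.2
          simp only [Finset.mem_range] at hx2 ⊢
          omega
        · rw [Finset.card_erase_of_mem h, s.2.2]; omega⟩
    else 0
  map_add' f g := by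
    funext s
    simp only [Pi.add_apply]
    by_cases h : n ∈ s.1 <;> simp [h]
  map_smul' c f := by
    funext s
    simp only [Pi.smul_apply, smul_eq_mul, RingHom.id_apply]
    by_cases h : n ∈ s.1 <;> simp [h]

/-- `i₀ : V_a^{n-1} → V_a^n` (as `izero n a : V_a^n → V_a^{n+1}`), the inclusion of the
summand of subsets not containing the new top element. -/
def izero (n a : ℕ) : V n a →ₗ[A] V (n+1) a where
  toFun f s := if h : n ∈ s.1 then 0 else
      f ⟨s.1, by
        refine ⟨fun x hx => ?_, s.2.2⟩
        have hx2 := s.2.1 hx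
        simp only [Finset.mem_range] at hx2 ⊢
        rcases Nat.lt_succ_iff_lt_or_eq.mp hx2 with h' | h'
        · exact h'
        · exact absurd (h' ▸ hx) h⟩
  map_add' f g := by
    funext s
    simp only [Pi.add_apply]
    by_cases h : n ∈ s.1 <;> simp [h]
  map_smul' c f := by
    funext s
    simp only [Pi.smul_apply, smul_eq_mul, RingHom.id_apply]
    by_cases h : n ∈ s.1 <;> simp [h]

/-- `p₋₁ : V_a^n → V_{a-1}^{n-1}` (as `pminus n a : V_{a+1}^{n+1} → V_a^n`), the projection
onto the summand of subsets containing the top element. -/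
def pminus (n a : ℕ) : V (n+1) (a+1) →ₗ[A] V n a where
  toFun f t := f ⟨insert n t.1, by
    have hn : n ∉ t.1 := fun h => by
      have := t.2.1 h; simp [Finset.mem_range] at this
    constructor
    · intro x hx
      rcases Finset.mem_insert.mp hx with rfl | hx
      · simp
      · have := t.2.1 hx; simp only [Finset.mem_range] at this ⊢; omega
    · rw [Finset.card_insert_of_notMem hn, t.2.2]⟩
  map_add' f g := rfl
  map_smul' c f := rfl

/-- `p₀ : V_a^n → V_a^{n-1}` (as `pzero n a : V_a^{n+1} → V_a^n`), the projection onto the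
summand of subsets not containing the top element. -/
def pzero (n a : ℕ) : V (n+1) a →ₗ[A] V n a where
  toFun f t := f ⟨t.1, by
    refine ⟨fun x hx => ?_, t.2.2⟩
    have := t.2.1 hx; simp only [Finset.mem_range] at this ⊢; omega⟩
  map_add' f g := rfl
  map_smul' c f := rfl

/-- The diagonal operator on `V_a^n` acting by the scalar `x` on basis subsets containing `m`
and by `y` on those not containing `m`; for `m = n-1` this is `x • i₋₁ p₋₁ + y • i₀ p₀`. -/
def diagOp (n a m : ℕ) (x y : A) : Module.End A (V n a) where
  toFun f s := (if m ∈ s.1 then x else y) * f s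
  map_add' f g := by
    funext s
    simp only [Pi.add_apply]
    ring
  map_smul' c f := by
    funext s
    simp only [Pi.smul_apply, smul_eq_mul, RingHom.id_apply]
    ring

/-- The recursively defined action of the generator `X_i^+` on `V_a^n`
(`XpOp n a i`, where `i` is the literal subscript, `1 ≤ i ≤ n-1`). -/
def XpOp : (n a i : ℕ) → Module.End A (V n a)
  | 0, _, _ => 0
  | 1, _, _ => 0
  | _+2, 0, _ => 0
  | n+2, a+1, i =>
    if a + 1 = n + 2 then 0
    else if i = n + 1 then
      (iminus (n+1) a) ∘ₗ (izero n a) ∘ₗ (pminus n a) ∘ₗ (pzero (n+1) (a+1))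
    else
      (iminus (n+1) a) ∘ₗ (XpOp (n+1) a i) ∘ₗ (pminus (n+1) a)
      + (izero (n+1) (a+1)) ∘ₗ (XpOp (n+1) (a+1) i) ∘ₗ (pzero (n+1) (a+1))

/-- The recursively defined action of the generator `X_i^-` on `V_a^n`. -/
def XmOp : (n a i : ℕ) → Module.End A (V n a)
  | 0, _, _ => 0
  | 1, _, _ => 0
  | _+2, 0, _ => 0
  | n+2, a+1, i =>
    if a + 1 = n + 2 then 0
    else if i = n + 1 then
      (izero (n+1) (a+1)) ∘ₗ (iminus n a) ∘ₗ (pzero n a) ∘ₗ (pminus (n+1) a)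
    else
      (iminus (n+1) a) ∘ₗ (XmOp (n+1) a i) ∘ₗ (pminus (n+1) a)
      + (izero (n+1) (a+1)) ∘ₗ (XmOp (n+1) (a+1) i) ∘ₗ (pzero (n+1) (a+1))

/-- The recursively defined action of the generator `K_i` on `V_a^n`.  The middle factors
`diagOp … 1 q` and `diagOp … q⁻¹ 1` are the operators `i₋₁ p₋₁ + q i₀ p₀` and
`q⁻¹ i₋₁ p₋₁ + i₀ p₀` of the recursion. -/
def KOp : (n a i : ℕ) → Module.End A (V n a)
  | 0, _, _ => 1
  | 1, _, _ => 1
  | _+2, 0, _ => 1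
  | n+2, a+1, i =>
    if a + 1 = n + 2 then 1
    else if i = n + 1 then
      (iminus (n+1) a) ∘ₗ (diagOp (n+1) a n 1 qq) ∘ₗ (pminus (n+1) a)
      + (izero (n+1) (a+1)) ∘ₗ (diagOp (n+1) (a+1) n qq⁻¹ 1) ∘ₗ (pzero (n+1) (a+1))
    else
      (iminus (n+1) a) ∘ₗ (KOp (n+1) a i) ∘ₗ (pminus (n+1) a)
      + (izero (n+1) (a+1)) ∘ₗ (KOp (n+1) (a+1) i) ∘ₗ (pzero (n+1) (a+1))

/-- The recursively defined action of `K_i⁻¹` on `V_a^n` (the inverse of `KOp`),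
given by the same recursion with `q` and `q⁻¹` interchanged. -/
def KinvOp : (n a i : ℕ) → Module.End A (V n a)
  | 0, _, _ => 1
  | 1, _, _ => 1
  | _+2, 0, _ => 1
  | n+2, a+1, i =>
    if a + 1 = n + 2 then 1
    else if i = n + 1 then
      (iminus (n+1) a) ∘ₗ (diagOp (n+1) a n 1 qq⁻¹) ∘ₗ (pminus (n+1) a)
      + (izero (n+1) (a+1)) ∘ₗ (diagOp (n+1) (a+1) n qq 1) ∘ₗ (pzero (n+1) (a+1))
    else
      (iminus (n+1) a) ∘ₗ (KinvOp (n+1) a i) ∘ₗ (pminus (n+1) a)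
      + (izero (n+1) (a+1)) ∘ₗ (KinvOp (n+1) (a+1) i) ∘ₗ (pzero (n+1) (a+1))
/-! ### The quantum group `U_q(sl_n)` by generators and relations.

We present the algebra with `m = n - 1` generators of each kind `K i, K i⁻¹, X i⁺, X i⁻`,
indexed by `i : Fin m` (so `i` corresponds to the subscript `i + 1 ∈ {1, …, n-1}`). -/

/-- Generators of `U_q(sl_n)` (with `m = n-1`). -/
inductive UqGen (m : ℕ) : Type
  | K : Fin m → UqGen m
  | Kinv : Fin m → UqGen m
  | Xp : Fin m → UqGen m
  | Xm : Fin m → UqGen m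

/-- The free `𝔸`-algebra on the generators. -/
abbrev FA (m : ℕ) : Type := FreeAlgebra A (UqGen m)

namespace FA
variable {m : ℕ}
def K (i : Fin m) : FA m := FreeAlgebra.ι A (UqGen.K i)
def Kinv (i : Fin m) : FA m := FreeAlgebra.ι A (UqGen.Kinv i)
def Xp (i : Fin m) : FA m := FreeAlgebra.ι A (UqGen.Xp i)
def Xm (i : Fin m) : FA m := FreeAlgebra.ι A (UqGen.Xm i)
end FA

/-- The Cartan integers `(i,j)` of type `A_m`: `2` if `i = j`, `-1` if `|i-j| = 1`,
`0` if `|i-j| ≥ 2`. -/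
def cart {m : ℕ} (i j : Fin m) : ℤ :=
  if i = j then 2 else if (i : ℕ) + 1 = j ∨ (j : ℕ) + 1 = i then -1 else 0

/-- The defining relations of `U_q(sl_n)`. -/
inductive uqRel (m : ℕ) : FA m → FA m → Prop
  | KKinv (i : Fin m) : uqRel m (FA.K i * FA.Kinv i) 1
  | KinvK (i : Fin m) : uqRel m (FA.Kinv i * FA.K i) 1
  | KK (i j : Fin m) : uqRel m (FA.K i * FA.K j) (FA.K j * FA.K i)
  | KXp (i j : Fin m) : uqRel m (FA.K i * FA.Xp j) (qq ^ (cart i j) • (FA.Xp j * FA.K i))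
  | KXm (i j : Fin m) : uqRel m (FA.K i * FA.Xm j) (qq ^ (-cart i j) • (FA.Xm j * FA.K i))
  | XpXm (i j : Fin m) :
      uqRel m (FA.Xp i * FA.Xm j - FA.Xm j * FA.Xp i)
        (if i = j then (qq - qq⁻¹)⁻¹ • (FA.K i - FA.Kinv i) else 0)
  | XpXp (i j : Fin m) (h : (i : ℕ) + 2 ≤ j ∨ (j : ℕ) + 2 ≤ i) :
      uqRel m (FA.Xp i * FA.Xp j) (FA.Xp j * FA.Xp i)
  | XmXm (i j : Fin m) (h : (i : ℕ) + 2 ≤ j ∨ (j : ℕ) + 2 ≤ i) :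
      uqRel m (FA.Xm i * FA.Xm j) (FA.Xm j * FA.Xm i)
  | serreP (i j : Fin m) (h : (i : ℕ) + 1 = j ∨ (j : ℕ) + 1 = i) :
      uqRel m (FA.Xp i ^ 2 * FA.Xp j - (qq + qq⁻¹) • (FA.Xp i * FA.Xp j * FA.Xp i)
        + FA.Xp j * FA.Xp i ^ 2) 0
  | serreM (i j : Fin m) (h : (i : ℕ) + 1 = j ∨ (j : ℕ) + 1 = i) :
      uqRel m (FA.Xm i ^ 2 * FA.Xm j - (qq + qq⁻¹) • (FA.Xm i * FA.Xm j * FA.Xm i)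
        + FA.Xm j * FA.Xm i ^ 2) 0

/-- The quantum group `U_q(sl_{m+1})`, presented by generators and relations.
For `U_q(sl_n)` take `m = n - 1`. -/
abbrev Uq (m : ℕ) : Type := RingQuot (uqRel m)

namespace Uq
variable {m : ℕ}
/-- The generator `K_{i+1}` of `U_q(sl_n)`. -/
def K (i : Fin m) : Uq m := RingQuot.mkAlgHom A (uqRel m) (FA.K i)
/-- The generator `K_{i+1}⁻¹` of `U_q(sl_n)`. -/
def Kinv (i : Fin m) : Uq m := RingQuot.mkAlgHom A (uqRel m) (FA.Kinv i)
/-- The generator `X_{i+1}^+` of `U_q(sl_n)`. -/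
def Xp (i : Fin m) : Uq m := RingQuot.mkAlgHom A (uqRel m) (FA.Xp i)
/-- The generator `X_{i+1}^-` of `U_q(sl_n)`. -/
def Xm (i : Fin m) : Uq m := RingQuot.mkAlgHom A (uqRel m) (FA.Xm i)
end Uq
/-! ### The duality maps `d_{a,n}`, triple invariants, and the pivotal elements `τ`. -/

/-- The sum-of-coefficients functional on `V_a^n`. -/
def sumF (n a : ℕ) : V n a →ₗ[A] A where
  toFun f := ∑ s : BS n a, f s
  map_add' f g := by simp [Finset.sum_add_distrib]
  map_smul' c f := by simp [Finset.mul_sum]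

/-- The "trivial" map `V_a^n → (V_c^n)^*`; when `V_a^n` and `V_c^n` are one-dimensional
(`a = 0` or `a = n`, and correspondingly for `c`) it sends the basis vector to the dual
basis vector.  Used for the base cases of `d_{a,n}`. -/
def dtriv (n a c : ℕ) : V n a →ₗ[A] Module.Dual A (V n c) :=
  LinearMap.smulRight (sumF n a) (sumF n c)

/-- The map `d_{a,n} : V_a^n → (V_{n-a}^n)^*`, defined recursively by
`d_{a,n} = i₀ ∘ d_{a-1,n-1} ∘ p₋₁ + (-q)^{-a} i₋₁ ∘ d_{a,n-1} ∘ p₀`, with both base cases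
sending the basis vector to the dual basis vector.  Here `dmap n a c` has target
`(V_c^n)^*`, to be used with `c = n - a`. -/
def dmap : (n a c : ℕ) → (V n a →ₗ[A] Module.Dual A (V n c))
  | 0, a, c => dtriv 0 a c
  | n+1, 0, c => dtriv (n+1) 0 c
  | n+1, a+1, c =>
    if a + 1 = n + 1 then dtriv (n+1) (a+1) c
    else
      match c with
      | 0 => 0
      | c+1 =>
        (pzero n (c+1)).dualMap ∘ₗ (dmap n a (c+1)) ∘ₗ (pminus n a)
        + ((-qq) ^ (a+1))⁻¹ •
            ((pminus n c).dualMap ∘ₗ (dmap n (a+1) c) ∘ₗ (pzero n (a+1)))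

section voutvin

open TensorProduct

/-- First term of the recursion for `v_out`: `(-1)^c q^{b+c} (i₋₁ ⊗ i₀ ⊗ i₀)`. -/
def vterm1 (n a b c : ℕ) (v : V n a ⊗[A] (V n b ⊗[A] V n c)) :
    V (n+1) (a+1) ⊗[A] (V (n+1) b ⊗[A] V (n+1) c) :=
  ((-1 : A)^c * qq^(b+c)) •
    (TensorProduct.map (iminus n a) (TensorProduct.map (izero n b) (izero n c)) v)

/-- Second term of the recursion for `v_out`: `(-1)^a q^c (i₀ ⊗ i₋₁ ⊗ i₀)`. -/
def vterm2 (n a b c : ℕ) (v : V n a ⊗[A] (V n b ⊗[A] V n c)) :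
    V (n+1) a ⊗[A] (V (n+1) (b+1) ⊗[A] V (n+1) c) :=
  ((-1 : A)^a * qq^c) •
    (TensorProduct.map (izero n a) (TensorProduct.map (iminus n b) (izero n c)) v)

/-- Third term of the recursion for `v_out`: `(-1)^b (i₀ ⊗ i₀ ⊗ i₋₁)`. -/
def vterm3 (n a b c : ℕ) (v : V n a ⊗[A] (V n b ⊗[A] V n c)) :
    V (n+1) a ⊗[A] (V (n+1) b ⊗[A] V (n+1) (c+1)) :=
  ((-1 : A)^b) •
    (TensorProduct.map (izero n a) (TensorProduct.map (izero n b) (iminus n c)) v)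

/-- The triple invariant `v_out^n_{a,b,c} ∈ V_a^n ⊗ V_b^n ⊗ V_c^n` (intended for
`a + b + c = n`), defined by the recursion of Definition `defn:trivalent-vertices`,
omitting any term with a negative subscript. -/
def voutE : (n a b c : ℕ) → V n a ⊗[A] (V n b ⊗[A] V n c)
  | 0, _, _, _ => (fun _ => (1:A)) ⊗ₜ[A] ((fun _ => (1:A)) ⊗ₜ[A] (fun _ => (1:A)))
  | n+1, 0, 0, 0 => 0
  | n+1, a+1, 0, 0 => vterm1 n a 0 0 (voutE n a 0 0)
  | n+1, 0, b+1, 0 => vterm2 n 0 b 0 (voutE n 0 b 0)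
  | n+1, 0, 0, c+1 => vterm3 n 0 0 c (voutE n 0 0 c)
  | n+1, a+1, b+1, 0 =>
      vterm1 n a (b+1) 0 (voutE n a (b+1) 0) + vterm2 n (a+1) b 0 (voutE n (a+1) b 0)
  | n+1, a+1, 0, c+1 =>
      vterm1 n a 0 (c+1) (voutE n a 0 (c+1)) + vterm3 n (a+1) 0 c (voutE n (a+1) 0 c)
  | n+1, 0, b+1, c+1 =>
      vterm2 n 0 b (c+1) (voutE n 0 b (c+1)) + vterm3 n 0 (b+1) c (voutE n 0 (b+1) c)
  | n+1, a+1, b+1, c+1 =>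
      vterm1 n a (b+1) (c+1) (voutE n a (b+1) (c+1))
      + vterm2 n (a+1) b (c+1) (voutE n (a+1) b (c+1))
      + vterm3 n (a+1) (b+1) c (voutE n (a+1) (b+1) c)

/-- First term of the recursion for `v_in`: `(-1)^c (…) ∘ (p₋₁ ⊗ p₀ ⊗ p₀)`. -/
def wterm1 (n a b c : ℕ) (φ : V n a ⊗[A] (V n b ⊗[A] V n c) →ₗ[A] A) :
    V (n+1) (a+1) ⊗[A] (V (n+1) b ⊗[A] V (n+1) c) →ₗ[A] A :=
  ((-1 : A)^c) •
    (φ ∘ₗ TensorProduct.map (pminus n a) (TensorProduct.map (pzero n b) (pzero n c)))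

/-- Second term of the recursion for `v_in`: `(-1)^a q^{-a} (…) ∘ (p₀ ⊗ p₋₁ ⊗ p₀)`. -/
def wterm2 (n a b c : ℕ) (φ : V n a ⊗[A] (V n b ⊗[A] V n c) →ₗ[A] A) :
    V (n+1) a ⊗[A] (V (n+1) (b+1) ⊗[A] V (n+1) c) →ₗ[A] A :=
  ((-1 : A)^a * (qq^a)⁻¹) •
    (φ ∘ₗ TensorProduct.map (pzero n a) (TensorProduct.map (pminus n b) (pzero n c)))

/-- Third term of the recursion for `v_in`: `(-1)^b q^{-a-b} (…) ∘ (p₀ ⊗ p₀ ⊗ p₋₁)`. -/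
def wterm3 (n a b c : ℕ) (φ : V n a ⊗[A] (V n b ⊗[A] V n c) →ₗ[A] A) :
    V (n+1) a ⊗[A] (V (n+1) b ⊗[A] V (n+1) (c+1)) →ₗ[A] A :=
  ((-1 : A)^b * (qq^(a+b))⁻¹) •
    (φ ∘ₗ TensorProduct.map (pzero n a) (TensorProduct.map (pzero n b) (pminus n c)))

/-- The triple coinvariant `v_in^n_{a,b,c} : V_a^n ⊗ V_b^n ⊗ V_c^n → 𝔸` (intended for
`a + b + c = n`), defined recursively, omitting any term with a negative subscript. -/
def vinE : (n a b c : ℕ) → (V n a ⊗[A] (V n b ⊗[A] V n c) →ₗ[A] A)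
  | 0, a, b, c =>
      (LinearMap.mul' A A) ∘ₗ
        TensorProduct.map (sumF 0 a)
          ((LinearMap.mul' A A) ∘ₗ TensorProduct.map (sumF 0 b) (sumF 0 c))
  | n+1, 0, 0, 0 => 0
  | n+1, a+1, 0, 0 => wterm1 n a 0 0 (vinE n a 0 0)
  | n+1, 0, b+1, 0 => wterm2 n 0 b 0 (vinE n 0 b 0)
  | n+1, 0, 0, c+1 => wterm3 n 0 0 c (vinE n 0 0 c)
  | n+1, a+1, b+1, 0 =>
      wterm1 n a (b+1) 0 (vinE n a (b+1) 0) + wterm2 n (a+1) b 0 (vinE n (a+1) b 0)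
  | n+1, a+1, 0, c+1 =>
      wterm1 n a 0 (c+1) (vinE n a 0 (c+1)) + wterm3 n (a+1) 0 c (vinE n (a+1) 0 c)
  | n+1, 0, b+1, c+1 =>
      wterm2 n 0 b (c+1) (vinE n 0 b (c+1)) + wterm3 n 0 (b+1) c (vinE n 0 (b+1) c)
  | n+1, a+1, b+1, c+1 =>
      wterm1 n a (b+1) (c+1) (vinE n a (b+1) (c+1))
      + wterm2 n (a+1) b (c+1) (vinE n (a+1) b (c+1))
      + wterm3 n (a+1) (b+1) c (vinE n (a+1) (b+1) c)

end voutvin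

/-- The operator `∏_{j=1}^{n-1} K_j^j` on `V_a^n`. -/
def kjOp (n a : ℕ) : Module.End A (V n a) :=
  (List.ofFn fun i : Fin (n-1) => (KOp n a ((i : ℕ)+1)) ^ ((i : ℕ)+1)).prod

/-- The pivotal operator `τ_n = ∏_{j=1}^{n-1} K_j^{j(n-j)}` on `V_a^n`. -/
def tauOp (n a : ℕ) : Module.End A (V n a) :=
  (List.ofFn fun i : Fin (n-1) => (KOp n a ((i : ℕ)+1)) ^ (((i : ℕ)+1) * (n - ((i : ℕ)+1)))).prod

/-- The inverse pivotal operator `τ_n⁻¹ = ∏_{j=1}^{n-1} K_j^{-j(n-j)}` on `V_a^n`. -/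
def tauinvOp (n a : ℕ) : Module.End A (V n a) :=
  (List.ofFn fun i : Fin (n-1) => (KinvOp n a ((i : ℕ)+1)) ^ (((i : ℕ)+1) * (n - ((i : ℕ)+1)))).prod

/-- The element `τ_n = ∏_{j=1}^{n-1} K_j^{j(n-j)} ∈ U_q(sl_n)`. -/
def tauU (n : ℕ) : Uq (n-1) :=
  (List.ofFn fun i : Fin (n-1) => (Uq.K i) ^ (((i : ℕ)+1) * (n - ((i : ℕ)+1)))).prod

/-- The Cartan integers for literal subscripts `i, j ∈ {1, …, n-1}`. -/
def cartN (i j : ℕ) : ℤ :=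
  if i = j then 2 else if i + 1 = j ∨ j + 1 = i then -1 else 0

/-! ### Auxiliary lemmas for Statement 7 -/

lemma qq_ne : (qq : A) ≠ 0 := RatFunc.X_ne_zero
lemma nqq_ne : (-qq : A) ≠ 0 := neg_ne_zero.mpr qq_ne

lemma Vcongr {n a : ℕ} (f : V n a) {S T : Finset ℕ} {hS : S ⊆ Finset.range n ∧ S.card = a}
    {hT : T ⊆ Finset.range n ∧ T.card = a} (h : S = T) : f ⟨S, hS⟩ = f ⟨T, hT⟩ := by
  subst h; rfl

lemma memD {n a : ℕ} (j : ℕ) (s : BS n a) (h : j ∈ s.1 ∧ j - 1 ∉ s.1) :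
    insert (j-1) (s.1.erase j) ⊆ Finset.range n ∧ (insert (j-1) (s.1.erase j)).card = a := by
  have hj : 1 ≤ j := Nat.one_le_iff_ne_zero.mpr (by rintro rfl; exact h.2 h.1)
  have hjn : j < n := Finset.mem_range.mp (s.2.1 h.1)
  have ha : 0 < a := s.2.2 ▸ Finset.card_pos.mpr ⟨j, h.1⟩
  constructor
  · intro x hx
    rcases Finset.mem_insert.mp hx with rfl | hx
    · exact Finset.mem_range.mpr (by omega)
    · exact s.2.1 (Finset.mem_of_mem_erase hx)
  · rw [Finset.card_insert_of_notMem (fun hc => h.2 (Finset.mem_of_mem_erase hc)),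
      Finset.card_erase_of_mem h.1, s.2.2]
    omega

lemma memU {n a : ℕ} (j : ℕ) (hjn : j < n) (s : BS n a) (h : j - 1 ∈ s.1 ∧ j ∉ s.1) :
    insert j (s.1.erase (j-1)) ⊆ Finset.range n ∧ (insert j (s.1.erase (j-1))).card = a := by
  have ha : 0 < a := s.2.2 ▸ Finset.card_pos.mpr ⟨j-1, h.1⟩
  constructor
  · intro x hx
    rcases Finset.mem_insert.mp hx with rfl | hx
    · exact Finset.mem_range.mpr hjn
    · exact s.2.1 (Finset.mem_of_mem_erase hx)
  · rw [Finset.card_insert_of_notMem (fun hc => h.2 (Finset.mem_of_mem_erase hc)),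
      Finset.card_erase_of_mem h.1, s.2.2]
    omega

lemma XpOp_apply (n : ℕ) : ∀ (a j : ℕ), 1 ≤ j → j + 1 ≤ n → ∀ (f : V n a) (s : BS n a),
    XpOp n a j f s =
      if h : j ∈ s.1 ∧ j - 1 ∉ s.1 then f ⟨insert (j-1) (s.1.erase j), memD j s h⟩ else 0 := by
  induction n using Nat.strong_induction_on with
  | _ n ih => match n with
    | 0 => intro a j hj hjn; omega
    | 1 => intro a j hj hjn; omega
    | (m+2) =>
      intro a j hj hjn f s
      match a with
      | 0 =>
        have hs : s.1 = ∅ := Finset.card_eq_zero.mp s.2.2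
        have hc : ¬ (j ∈ s.1 ∧ j - 1 ∉ s.1) := by rw [hs]; simp
        rw [dif_neg hc]
        rfl
      | (b+1) =>
        simp only [XpOp]
        by_cases htop : b + 1 = m + 2
        · rw [if_pos htop]
          have hs : s.1 = Finset.range (m+2) :=
            Finset.eq_of_subset_of_card_le s.2.1 (by rw [s.2.2, Finset.card_range]; omega)
          have hc : ¬ (j ∈ s.1 ∧ j - 1 ∉ s.1) := by
            rw [hs]; simp only [Finset.mem_range, not_and, not_not]; intro _; omega
          rw [dif_neg hc]; rfl
        · rw [if_neg htop]
          by_cases hji : j = m + 1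
          · subst hji
            simp only [eq_self_iff_true, if_true, LinearMap.comp_apply, iminus, izero, pminus,
              pzero, LinearMap.coe_mk, AddHom.coe_mk, Nat.add_sub_cancel]
            by_cases hm1 : m + 1 ∈ s.1
            · rw [dif_pos hm1]
              by_cases hm : m ∈ s.1
              · have : m ∈ s.1.erase (m+1) := Finset.mem_erase.mpr ⟨by omega, hm⟩
                rw [dif_pos this, dif_neg (by simp [hm1, hm])]
              · have : m ∉ s.1.erase (m+1) := fun hc => hm (Finset.mem_of_mem_erase hc)
                rw [dif_neg this, dif_pos ⟨hm1, hm⟩]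
            · rw [dif_neg hm1, dif_neg (by simp [hm1])]
          · rw [if_neg hji]
            have hjm : j + 1 ≤ m + 1 := by omega
            simp only [LinearMap.add_apply, LinearMap.comp_apply, iminus, izero,
              LinearMap.coe_mk, AddHom.coe_mk, Pi.add_apply]
            by_cases hm1 : m + 1 ∈ s.1
            · rw [dif_pos hm1, dif_pos hm1]
              rw [ih (m+1) (by omega) b j hj hjm]
              have hmem : (j ∈ s.1.erase (m+1) ∧ j - 1 ∉ s.1.erase (m+1)) ↔
                  (j ∈ s.1 ∧ j - 1 ∉ s.1) := by
                simp only [Finset.mem_erase]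
                constructor
                · rintro ⟨⟨-, h1⟩, h2⟩
                  exact ⟨h1, fun hc => h2 ⟨by omega, hc⟩⟩
                · rintro ⟨h1, h2⟩
                  exact ⟨⟨hji, h1⟩, fun hc => h2 hc.2⟩
              by_cases hc : j ∈ s.1 ∧ j - 1 ∉ s.1
              · rw [dif_pos (hmem.mpr hc), dif_pos hc]
                simp only [pminus, pzero, LinearMap.coe_mk, AddHom.coe_mk]
                rw [add_zero]
                apply Vcongr
                ext x
                simp only [Finset.mem_insert, Finset.mem_erase]
                constructor
                · rintro (rfl | rfl | ⟨hx1, hx2, hx3⟩)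
                  · exact Or.inr ⟨by omega, hm1⟩
                  · exact Or.inl rfl
                  · exact Or.inr ⟨hx1, hx3⟩
                · rintro (rfl | ⟨hx1, hx2⟩)
                  · exact Or.inr (Or.inl rfl)
                  · by_cases hx : x = m + 1
                    · exact Or.inl hx
                    · exact Or.inr (Or.inr ⟨hx1, hx, hx2⟩)
              · rw [dif_neg (fun hc' => hc (hmem.mp hc')), dif_neg hc, add_zero]
            · rw [dif_neg hm1, dif_neg hm1]
              rw [ih (m+1) (by omega) (b+1) j hj hjm]
              by_cases hc : j ∈ s.1 ∧ j - 1 ∉ s.1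
              · rw [dif_pos hc, dif_pos hc, zero_add]
                simp only [pzero, LinearMap.coe_mk, AddHom.coe_mk]
              · rw [dif_neg hc, dif_neg hc, zero_add]

lemma XmOp_apply (n : ℕ) : ∀ (a j : ℕ), 1 ≤ j → ∀ (hjn : j + 1 ≤ n), ∀ (f : V n a) (s : BS n a),
    XmOp n a j f s =
      if h : j - 1 ∈ s.1 ∧ j ∉ s.1 then f ⟨insert j (s.1.erase (j-1)), memU j hjn s h⟩ else 0 := by
  induction n using Nat.strong_induction_on with
  | _ n ih => match n with
    | 0 => intro a j hj hjn; omega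
    | 1 => intro a j hj hjn; omega
    | (m+2) =>
      intro a j hj hjn f s
      match a with
      | 0 =>
        have hs : s.1 = ∅ := Finset.card_eq_zero.mp s.2.2
        have hc : ¬ (j - 1 ∈ s.1 ∧ j ∉ s.1) := by rw [hs]; simp
        rw [dif_neg hc]
        rfl
      | (b+1) =>
        simp only [XmOp]
        by_cases htop : b + 1 = m + 2
        · rw [if_pos htop]
          have hs : s.1 = Finset.range (m+2) :=
            Finset.eq_of_subset_of_card_le s.2.1 (by rw [s.2.2, Finset.card_range]; omega)
          have hc : ¬ (j - 1 ∈ s.1 ∧ j ∉ s.1) := by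
            rw [hs]; simp only [Finset.mem_range, not_and, not_not]; intro _; omega
          rw [dif_neg hc]; rfl
        · rw [if_neg htop]
          by_cases hji : j = m + 1
          · subst hji
            simp only [eq_self_iff_true, if_true, LinearMap.comp_apply, iminus, izero, pminus,
              pzero, LinearMap.coe_mk, AddHom.coe_mk, Nat.add_sub_cancel]
            by_cases hm1 : m + 1 ∈ s.1
            · rw [dif_pos hm1, dif_neg (by simp [hm1])]
            · rw [dif_neg hm1]
              by_cases hm : m ∈ s.1
              · rw [dif_pos hm, dif_pos ⟨hm, hm1⟩]
              · rw [dif_neg hm, dif_neg (by simp [hm])]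
          · rw [if_neg hji]
            have hjm : j + 1 ≤ m + 1 := by omega
            simp only [LinearMap.add_apply, LinearMap.comp_apply, iminus, izero,
              LinearMap.coe_mk, AddHom.coe_mk, Pi.add_apply]
            by_cases hm1 : m + 1 ∈ s.1
            · rw [dif_pos hm1, dif_pos hm1]
              rw [ih (m+1) (by omega) b j hj hjm]
              have hmem : (j - 1 ∈ s.1.erase (m+1) ∧ j ∉ s.1.erase (m+1)) ↔
                  (j - 1 ∈ s.1 ∧ j ∉ s.1) := by
                simp only [Finset.mem_erase]
                constructor
                · rintro ⟨⟨-, h1⟩, h2⟩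
                  exact ⟨h1, fun hc => h2 ⟨hji, hc⟩⟩
                · rintro ⟨h1, h2⟩
                  exact ⟨⟨by omega, h1⟩, fun hc => h2 hc.2⟩
              by_cases hc : j - 1 ∈ s.1 ∧ j ∉ s.1
              · rw [dif_pos (hmem.mpr hc), dif_pos hc]
                simp only [pminus, pzero, LinearMap.coe_mk, AddHom.coe_mk]
                rw [add_zero]
                apply Vcongr
                ext x
                simp only [Finset.mem_insert, Finset.mem_erase]
                constructor
                · rintro (rfl | rfl | ⟨hx1, hx2, hx3⟩)
                  · exact Or.inr ⟨by omega, hm1⟩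
                  · exact Or.inl rfl
                  · exact Or.inr ⟨hx1, hx3⟩
                · rintro (rfl | ⟨hx1, hx2⟩)
                  · exact Or.inr (Or.inl rfl)
                  · by_cases hx : x = m + 1
                    · exact Or.inl hx
                    · exact Or.inr (Or.inr ⟨hx1, hx, hx2⟩)
              · rw [dif_neg (fun hc' => hc (hmem.mp hc')), dif_neg hc, add_zero]
            · rw [dif_neg hm1, dif_neg hm1]
              rw [ih (m+1) (by omega) (b+1) j hj hjm]
              by_cases hc : j - 1 ∈ s.1 ∧ j ∉ s.1
              · rw [dif_pos hc, dif_pos hc, zero_add]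
                simp only [pzero, LinearMap.coe_mk, AddHom.coe_mk]
              · rw [dif_neg hc, dif_neg hc, zero_add]

lemma KOp_apply (n : ℕ) : ∀ (a j : ℕ), 1 ≤ j → j + 1 ≤ n → ∀ (f : V n a) (s : BS n a),
    KOp n a j f s =
      (if j ∈ s.1 then qq else 1) * ((if j - 1 ∈ s.1 then qq⁻¹ else 1) * f s) := by
  induction n using Nat.strong_induction_on with
  | _ n ih => match n with
    | 0 => intro a j hj hjn; omega
    | 1 => intro a j hj hjn; omega
    | (m+2) =>
      intro a j hj hjn f s
      match a with
      | 0 =>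
        have hs : s.1 = ∅ := Finset.card_eq_zero.mp s.2.2
        rw [if_neg (by rw [hs]; simp), if_neg (by rw [hs]; simp), one_mul, one_mul]
        rfl
      | (b+1) =>
        simp only [KOp]
        by_cases htop : b + 1 = m + 2
        · rw [if_pos htop]
          have hs : s.1 = Finset.range (m+2) :=
            Finset.eq_of_subset_of_card_le s.2.1 (by rw [s.2.2, Finset.card_range]; omega)
          rw [if_pos (by rw [hs]; exact Finset.mem_range.mpr (by omega)),
            if_pos (by rw [hs]; exact Finset.mem_range.mpr (by omega)),
            ← mul_assoc, mul_inv_cancel₀ qq_ne, one_mul]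
          rfl
        · rw [if_neg htop]
          by_cases hji : j = m + 1
          · subst hji
            have hne : m ≠ m + 1 := Ne.symm (Nat.succ_ne_self m)
            simp only [eq_self_iff_true, if_true, LinearMap.add_apply, LinearMap.comp_apply,
              iminus, izero, pminus, pzero, diagOp, LinearMap.coe_mk, AddHom.coe_mk,
              Pi.add_apply, Nat.add_sub_cancel]
            by_cases hm1 : m + 1 ∈ s.1
            · rw [dif_pos hm1, dif_pos hm1, add_zero, if_pos hm1]
              have hins : insert (m+1) ((s.1).erase (m+1)) = s.1 := Finset.insert_erase hm1
              simp only [Finset.mem_erase, hne, ne_eq, not_false_iff, true_and, hins,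
                Subtype.coe_eta]
              by_cases hm : m ∈ s.1
              · rw [if_pos hm, if_pos hm, one_mul, ← mul_assoc, mul_inv_cancel₀ qq_ne, one_mul]
              · rw [if_neg hm, if_neg hm, one_mul]
            · rw [dif_neg hm1, dif_neg hm1, zero_add, if_neg hm1, one_mul]
          · rw [if_neg hji]
            have hjm : j + 1 ≤ m + 1 := by omega
            simp only [LinearMap.add_apply, LinearMap.comp_apply, iminus, izero,
              LinearMap.coe_mk, AddHom.coe_mk, Pi.add_apply]
            have e1 : ∀ (X : Finset ℕ), (j ∈ X.erase (m+1)) = (j ∈ X) := by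
              intro X; simp [Finset.mem_erase, hji]
            have e2 : ∀ (X : Finset ℕ), (j - 1 ∈ X.erase (m+1)) = (j - 1 ∈ X) := by
              intro X; simp only [Finset.mem_erase, eq_iff_iff]
              exact ⟨fun h => h.2, fun h => ⟨by omega, h⟩⟩
            by_cases hm1 : m + 1 ∈ s.1
            · rw [dif_pos hm1, dif_pos hm1, add_zero]
              rw [ih (m+1) (by omega) b j hj hjm]
              have hins : insert (m+1) ((s.1).erase (m+1)) = s.1 := Finset.insert_erase hm1
              simp only [pminus, LinearMap.coe_mk, AddHom.coe_mk, e1, e2, hins,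
                Subtype.coe_eta]
            · rw [dif_neg hm1, dif_neg hm1, zero_add]
              rw [ih (m+1) (by omega) (b+1) j hj hjm]
              simp only [pzero, LinearMap.coe_mk, AddHom.coe_mk, Subtype.coe_eta]

lemma KinvOp_apply (n : ℕ) : ∀ (a j : ℕ), 1 ≤ j → j + 1 ≤ n → ∀ (f : V n a) (s : BS n a),
    KinvOp n a j f s =
      (if j ∈ s.1 then qq⁻¹ else 1) * ((if j - 1 ∈ s.1 then qq else 1) * f s) := by
  induction n using Nat.strong_induction_on with
  | _ n ih => match n with
    | 0 => intro a j hj hjn; omega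
    | 1 => intro a j hj hjn; omega
    | (m+2) =>
      intro a j hj hjn f s
      match a with
      | 0 =>
        have hs : s.1 = ∅ := Finset.card_eq_zero.mp s.2.2
        rw [if_neg (by rw [hs]; simp), if_neg (by rw [hs]; simp), one_mul, one_mul]
        rfl
      | (b+1) =>
        simp only [KinvOp]
        by_cases htop : b + 1 = m + 2
        · rw [if_pos htop]
          have hs : s.1 = Finset.range (m+2) :=
            Finset.eq_of_subset_of_card_le s.2.1 (by rw [s.2.2, Finset.card_range]; omega)
          rw [if_pos (by rw [hs]; exact Finset.mem_range.mpr (by omega)),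
            if_pos (by rw [hs]; exact Finset.mem_range.mpr (by omega)),
            ← mul_assoc, inv_mul_cancel₀ qq_ne, one_mul]
          rfl
        · rw [if_neg htop]
          by_cases hji : j = m + 1
          · subst hji
            have hne : m ≠ m + 1 := Ne.symm (Nat.succ_ne_self m)
            simp only [eq_self_iff_true, if_true, LinearMap.add_apply, LinearMap.comp_apply,
              iminus, izero, pminus, pzero, diagOp, LinearMap.coe_mk, AddHom.coe_mk,
              Pi.add_apply, Nat.add_sub_cancel]
            by_cases hm1 : m + 1 ∈ s.1
            · rw [dif_pos hm1, dif_pos hm1, add_zero, if_pos hm1]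
              have hins : insert (m+1) ((s.1).erase (m+1)) = s.1 := Finset.insert_erase hm1
              simp only [Finset.mem_erase, hne, ne_eq, not_false_iff, true_and, hins,
                Subtype.coe_eta]
              by_cases hm : m ∈ s.1
              · rw [if_pos hm, if_pos hm, one_mul, ← mul_assoc, inv_mul_cancel₀ qq_ne, one_mul]
              · rw [if_neg hm, if_neg hm, one_mul]
            · rw [dif_neg hm1, dif_neg hm1, zero_add, if_neg hm1, one_mul]
          · rw [if_neg hji]
            have hjm : j + 1 ≤ m + 1 := by omega
            simp only [LinearMap.add_apply, LinearMap.comp_apply, iminus, izero,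
              LinearMap.coe_mk, AddHom.coe_mk, Pi.add_apply]
            have e1 : ∀ (X : Finset ℕ), (j ∈ X.erase (m+1)) = (j ∈ X) := by
              intro X; simp [Finset.mem_erase, hji]
            have e2 : ∀ (X : Finset ℕ), (j - 1 ∈ X.erase (m+1)) = (j - 1 ∈ X) := by
              intro X; simp only [Finset.mem_erase, eq_iff_iff]
              exact ⟨fun h => h.2, fun h => ⟨by omega, h⟩⟩
            by_cases hm1 : m + 1 ∈ s.1
            · rw [dif_pos hm1, dif_pos hm1, add_zero]
              rw [ih (m+1) (by omega) b j hj hjm]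
              have hins : insert (m+1) ((s.1).erase (m+1)) = s.1 := Finset.insert_erase hm1
              simp only [pminus, LinearMap.coe_mk, AddHom.coe_mk, e1, e2, hins,
                Subtype.coe_eta]
            · rw [dif_neg hm1, dif_neg hm1, zero_add]
              rw [ih (m+1) (by omega) (b+1) j hj hjm]
              simp only [pzero, LinearMap.coe_mk, AddHom.coe_mk, Subtype.coe_eta]

def eS (n : ℕ) (S : Finset ℕ) : ℕ :=
  ∑ j ∈ Finset.range n, if j ∈ S then 0 else (S ∩ Finset.range j).card

def kap (n : ℕ) (S : Finset ℕ) : A := ((-qq) ^ eS n S)⁻¹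

lemma eS_insert_top (n : ℕ) (S : Finset ℕ) (hS : S ⊆ Finset.range n) :
    eS (n+1) (insert n S) = eS n S := by
  rw [eS, Finset.sum_range_succ, if_pos (Finset.mem_insert_self n S), add_zero]
  apply Finset.sum_congr rfl
  intro j hj
  have hjn : j < n := Finset.mem_range.mp hj
  have hnj : n ∉ Finset.range j := by simp; omega
  have h2 : insert n S ∩ Finset.range j = S ∩ Finset.range j :=
    Finset.insert_inter_of_notMem hnj
  by_cases hjS : j ∈ S
  · rw [if_pos hjS, if_pos (Finset.mem_insert_of_mem hjS)]
  · rw [if_neg hjS, if_neg (by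
      intro h
      rcases Finset.mem_insert.mp h with h | h
      · omega
      · exact hjS h), h2]

lemma eS_not_top (n : ℕ) (S : Finset ℕ) (hS : S ⊆ Finset.range n) :
    eS (n+1) S = eS n S + S.card := by
  have hn : n ∉ S := fun hc => by have := hS hc; simp at this
  rw [eS, Finset.sum_range_succ, if_neg hn, Finset.inter_eq_left.mpr hS]
  rfl

lemma eS_swap (n k : ℕ) (S : Finset ℕ) (hk : k ∈ S) (hk1 : k + 1 ∉ S) (hkn : k + 1 < n) :
    eS n S = eS n (insert (k+1) (S.erase k)) + 1 := by
  set S' := insert (k+1) (S.erase k) with hS'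
  have hkS' : k ∉ S' := by
    simp only [hS', Finset.mem_insert, Finset.mem_erase]
    push_neg
    exact ⟨by omega, fun h => absurd rfl h⟩
  have hk1S' : k + 1 ∈ S' := Finset.mem_insert_self _ _
  have hmem : ∀ x, x ≠ k → x ≠ k + 1 → ((x ∈ S') = (x ∈ S)) := by
    intro x h1 h2
    simp [hS', Finset.mem_insert, Finset.mem_erase, h1, h2]
  have hcap : ∀ x, x ≤ k → (S' ∩ Finset.range x) = (S ∩ Finset.range x) := by
    intro x hx
    ext y
    simp only [hS', Finset.mem_inter, Finset.mem_insert, Finset.mem_erase, Finset.mem_range]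
    constructor
    · rintro ⟨rfl | ⟨h1, h2⟩, hy⟩
      · omega
      · exact ⟨h2, hy⟩
    · rintro ⟨h1, hy⟩
      exact ⟨Or.inr ⟨by omega, h1⟩, hy⟩
  have hcard : ∀ x, k + 1 < x → (S' ∩ Finset.range x).card = (S ∩ Finset.range x).card := by
    intro x hx
    have hset : S' ∩ Finset.range x = insert (k+1) ((S ∩ Finset.range x).erase k) := by
      ext y
      simp only [hS', Finset.mem_inter, Finset.mem_insert, Finset.mem_erase, Finset.mem_range]
      constructor
      · rintro ⟨rfl | ⟨h1, h2⟩, hy⟩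
        · exact Or.inl rfl
        · exact Or.inr ⟨h1, h2, hy⟩
      · rintro (rfl | ⟨h1, h2, hy⟩)
        · exact ⟨Or.inl rfl, by omega⟩
        · exact ⟨Or.inr ⟨h1, h2⟩, hy⟩
    have hkmem : k ∈ S ∩ Finset.range x := Finset.mem_inter.mpr ⟨hk, Finset.mem_range.mpr (by omega)⟩
    have hpos : 0 < (S ∩ Finset.range x).card := Finset.card_pos.mpr ⟨k, hkmem⟩
    rw [hset, Finset.card_insert_of_notMem (by
        simp only [Finset.mem_erase, Finset.mem_inter]
        rintro ⟨-, h, -⟩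
        exact hk1 h), Finset.card_erase_of_mem hkmem]
    omega
  have hk1n : k + 1 ∈ Finset.range n := Finset.mem_range.mpr hkn
  have hkn' : k ∈ (Finset.range n).erase (k+1) :=
    Finset.mem_erase.mpr ⟨by omega, Finset.mem_range.mpr (by omega)⟩
  rw [eS, eS, ← Finset.add_sum_erase _ _ hk1n, ← Finset.add_sum_erase _ _ hkn',
    ← Finset.add_sum_erase _ _ hk1n, ← Finset.add_sum_erase _ _ hkn']
  have hsum : ∑ j ∈ (((Finset.range n).erase (k+1)).erase k),
      (if j ∈ S then 0 else (S ∩ Finset.range j).card) =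
      ∑ j ∈ (((Finset.range n).erase (k+1)).erase k),
      (if j ∈ S' then 0 else (S' ∩ Finset.range j).card) := by
    apply Finset.sum_congr rfl
    intro j hj
    have h1 : j ≠ k := (Finset.mem_erase.mp hj).1
    have h2 : j ≠ k + 1 := (Finset.mem_erase.mp (Finset.mem_erase.mp hj).2).1
    by_cases hjS : j ∈ S
    · rw [if_pos hjS, if_pos ((hmem j h1 h2).mpr hjS)]
    · rw [if_neg hjS, if_neg (fun hc => hjS ((hmem j h1 h2).mp hc))]
      rcases Nat.lt_or_ge j (k+1) with h | h
      · rw [hcap j (by omega)]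
      · rw [hcard j (by omega)]
  rw [hsum, if_pos hk, if_neg hk1, if_pos hk1S', if_neg hkS']
  have hfin : (S ∩ Finset.range (k+1)).card = (S' ∩ Finset.range k).card + 1 := by
    rw [hcap k le_rfl]
    have : S ∩ Finset.range (k+1) = insert k (S ∩ Finset.range k) := by
      ext y
      simp only [Finset.mem_inter, Finset.mem_insert, Finset.mem_range]
      constructor
      · rintro ⟨hy, hy2⟩
        rcases Nat.lt_or_ge y k with h | h
        · exact Or.inr ⟨hy, h⟩
        · exact Or.inl (by omega)
      · rintro (rfl | ⟨hy, hy2⟩)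
        · exact ⟨hk, by omega⟩
        · exact ⟨hy, by omega⟩
    rw [this, Finset.card_insert_of_notMem (by simp)]
  omega

lemma kap_insert_top (n : ℕ) (S : Finset ℕ) (hS : S ⊆ Finset.range n) :
    kap (n+1) (insert n S) = kap n S := by
  rw [kap, kap, eS_insert_top n S hS]

lemma kap_not_top (n : ℕ) (S : Finset ℕ) (hS : S ⊆ Finset.range n) :
    kap (n+1) S = ((-qq) ^ S.card)⁻¹ * kap n S := by
  rw [kap, kap, eS_not_top n S hS, pow_add, mul_inv, mul_comm]

lemma kap_swap (n k : ℕ) (S : Finset ℕ) (hk : k ∈ S) (hk1 : k + 1 ∉ S) (hkn : k + 1 < n) :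
    kap n (insert (k+1) (S.erase k)) = -qq * kap n S := by
  rw [kap, kap, eS_swap n k S hk hk1 hkn, pow_succ, mul_inv]
  rw [← mul_assoc, mul_comm (-qq), mul_assoc, mul_inv_cancel₀ nqq_ne, mul_one]

instance BSzeroUnique (n : ℕ) : Unique (BS n 0) where
  default := ⟨∅, by simp⟩
  uniq s := Subtype.ext (Finset.card_eq_zero.mp s.2.2)

instance BSfullUnique (n : ℕ) : Unique (BS n n) where
  default := ⟨Finset.range n, by simp⟩
  uniq s := Subtype.ext (Finset.eq_of_subset_of_card_le s.2.1
    (by show (Finset.range n).card ≤ s.1.card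
        rw [Finset.card_range]; exact s.2.2.ge))

lemma memC {n a c : ℕ} (hac : a + c = n) (s : BS n a) :
    Finset.range n \ s.1 ⊆ Finset.range n ∧ (Finset.range n \ s.1).card = c :=
  ⟨Finset.sdiff_subset, by rw [Finset.card_sdiff_of_subset s.2.1, Finset.card_range, s.2.2]; omega⟩

def splitEquiv (n a : ℕ) : (BS n a ⊕ BS n (a+1)) ≃ BS (n+1) (a+1) where
  toFun x := match x with
    | Sum.inl t => ⟨insert n t.1, by
        constructor
        · intro x hx
          rcases Finset.mem_insert.mp hx with rfl | hx
          · simp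
          · have := t.2.1 hx; simp only [Finset.mem_range] at this ⊢; omega
        · rw [Finset.card_insert_of_notMem
            (fun hc => by have := t.2.1 hc; simp at this), t.2.2]⟩
    | Sum.inr t => ⟨t.1, ⟨fun x hx => by
        have := t.2.1 hx; simp only [Finset.mem_range] at this ⊢; omega, t.2.2⟩⟩
  invFun s :=
    if h : n ∈ s.1 then
      Sum.inl ⟨s.1.erase n, ⟨fun x hx => by
          have h1 := Finset.mem_erase.mp hx
          have := s.2.1 h1.2
          simp only [Finset.mem_range] at this ⊢
          omega,
        by rw [Finset.card_erase_of_mem h, s.2.2]; omega⟩⟩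
    else
      Sum.inr ⟨s.1, ⟨fun x hx => by
          have := s.2.1 hx
          have hxn : x ≠ n := fun e => h (e ▸ hx)
          simp only [Finset.mem_range] at this ⊢
          omega, s.2.2⟩⟩
  left_inv x := by
    rcases x with t | t
    · have hnt : n ∉ t.1 := fun hc => by have := t.2.1 hc; simp at this
      simp only [dif_pos (Finset.mem_insert_self n t.1)]
      congr 1
      exact Subtype.ext (Finset.erase_insert hnt)
    · have hnt : n ∉ t.1 := fun hc => by have := t.2.1 hc; simp at this
      simp only [dif_neg hnt]
  right_inv s := by
    by_cases h : n ∈ s.1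
    · simp only [dif_pos h]
      exact Subtype.ext (Finset.insert_erase h)
    · simp only [dif_neg h]

lemma cpl_insert_top (n : ℕ) (X : Finset ℕ) (hX : X ⊆ Finset.range n) :
    Finset.range (n+1) \ insert n X = Finset.range n \ X := by
  ext x
  simp only [Finset.mem_sdiff, Finset.mem_insert, Finset.mem_range]
  constructor
  · rintro ⟨h1, h2⟩
    push_neg at h2
    exact ⟨by omega, h2.2⟩
  · rintro ⟨h1, h2⟩
    exact ⟨by omega, by push_neg; exact ⟨by omega, h2⟩⟩

lemma cpl_not_top (n : ℕ) (X : Finset ℕ) (hX : X ⊆ Finset.range n) :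
    Finset.range (n+1) \ X = insert n (Finset.range n \ X) := by
  have hn : n ∉ X := fun hc => by have := hX hc; simp at this
  ext x
  simp only [Finset.mem_sdiff, Finset.mem_insert, Finset.mem_range]
  constructor
  · rintro ⟨h1, h2⟩
    rcases Nat.lt_or_ge x n with h | h
    · exact Or.inr ⟨h, h2⟩
    · exact Or.inl (by omega)
  · rintro (rfl | ⟨h1, h2⟩)
    · exact ⟨by omega, hn⟩
    · exact ⟨by omega, h2⟩

lemma kap_empty (N : ℕ) : kap N ∅ = 1 := by simp [kap, eS]

lemma kap_full (N : ℕ) : kap N (Finset.range N) = 1 := by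
  have h : ∀ j ∈ Finset.range N,
      (if j ∈ Finset.range N then 0 else ((Finset.range N) ∩ Finset.range j).card) = 0 :=
    fun j hj => if_pos hj
  rw [kap, eS, Finset.sum_congr rfl h]
  simp

lemma dmap_apply : ∀ (n a c : ℕ) (hac : a + c = n) (v : V n a) (w : V n c),
    dmap n a c v w =
      ∑ s : BS n a, kap n s.1 * (v s * w ⟨Finset.range n \ s.1, memC hac s⟩) := by
  intro n
  induction n using Nat.strong_induction_on with
  | _ n ih => match n with
    | 0 =>
      intro a c hac v w
      have ha : a = 0 := by omega
      have hc : c = 0 := by omega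
      subst ha; subst hc
      simp only [dmap, dtriv, LinearMap.smulRight_apply, LinearMap.smul_apply, smul_eq_mul,
        sumF, LinearMap.coe_mk, AddHom.coe_mk]
      rw [Fintype.sum_unique, Fintype.sum_unique, Fintype.sum_unique]
      rw [show kap 0 ((default : BS 0 0)).1 = 1 from kap_empty 0, one_mul]
      congr 1
    | (n+1) =>
      intro a c hac v w
      match a with
      | 0 =>
        have hc : c = n + 1 := by omega
        subst hc
        simp only [dmap, dtriv, LinearMap.smulRight_apply, LinearMap.smul_apply, smul_eq_mul,
          sumF, LinearMap.coe_mk, AddHom.coe_mk]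
        rw [Fintype.sum_unique, Fintype.sum_unique, Fintype.sum_unique]
        rw [show kap (n+1) ((default : BS (n+1) 0)).1 = 1 from kap_empty (n+1), one_mul]
        congr 1
      | (a+1) =>
        simp only [dmap]
        by_cases htop : a + 1 = n + 1
        · rw [if_pos htop]
          have hc : c = 0 := by omega
          subst hc
          have ha : a = n := by omega
          subst ha
          simp only [dtriv, LinearMap.smulRight_apply, LinearMap.smul_apply, smul_eq_mul,
            sumF, LinearMap.coe_mk, AddHom.coe_mk]
          rw [Fintype.sum_unique, Fintype.sum_unique, Fintype.sum_unique]
          rw [show kap (a+1) ((default : BS (a+1) (a+1))).1 = 1 from kap_full (a+1), one_mul]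
          congr 1
          exact Vcongr w (by
            rw [show ((default : BS (a+1) (a+1))).1 = Finset.range (a+1) from rfl]
            simp)
        · rw [if_neg htop]
          match c, (by omega : c ≠ 0) with
          | (c+1), _ =>
          have h1 : a + (c + 1) = n := by omega
          have h2 : (a + 1) + c = n := by omega
          simp only [LinearMap.add_apply, LinearMap.comp_apply, LinearMap.dualMap_apply,
            LinearMap.smul_apply, smul_eq_mul]
          rw [ih n (by omega) a (c+1) h1, ih n (by omega) (a+1) c h2]
          rw [← Equiv.sum_comp (splitEquiv n a)
            (fun s => kap (n+1) s.1 * (v s * w ⟨Finset.range (n+1) \ s.1, memC hac s⟩)),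
            Fintype.sum_sum_type]
          congr 1
          · apply Finset.sum_congr rfl
            intro t _
            simp only [splitEquiv, Equiv.coe_fn_mk, pminus, pzero, LinearMap.coe_mk,
              AddHom.coe_mk, Subtype.coe_eta, cpl_insert_top n t.1 t.2.1,
              kap_insert_top n t.1 t.2.1]
          · rw [Finset.mul_sum]
            apply Finset.sum_congr rfl
            intro t _
            simp only [splitEquiv, Equiv.coe_fn_mk, pminus, pzero, LinearMap.coe_mk,
              AddHom.coe_mk, Subtype.coe_eta, cpl_not_top n t.1 t.2.1,
              kap_not_top n t.1 t.2.1, t.2.2]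
            ring

def swp (n a j : ℕ) (hjn : j < n) : BS n a → BS n a := fun s =>
  if h : j - 1 ∈ s.1 ∧ j ∉ s.1 then ⟨insert j (s.1.erase (j-1)), memU j hjn s h⟩
  else if h' : j ∈ s.1 ∧ j - 1 ∉ s.1 then ⟨insert (j-1) (s.1.erase j), memD j s h'⟩
  else s

lemma up_dn (j : ℕ) (hj : 1 ≤ j) (S : Finset ℕ) (h1 : j - 1 ∈ S) (h2 : j ∉ S) :
    insert (j-1) ((insert j (S.erase (j-1))).erase j) = S := by
  rw [Finset.erase_insert (fun hc => h2 (Finset.mem_of_mem_erase hc)),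
    Finset.insert_erase h1]

lemma dn_up (j : ℕ) (hj : 1 ≤ j) (S : Finset ℕ) (h1 : j ∈ S) (h2 : j - 1 ∉ S) :
    insert j ((insert (j-1) (S.erase j)).erase (j-1)) = S := by
  rw [Finset.erase_insert (fun hc => h2 (Finset.mem_of_mem_erase hc)),
    Finset.insert_erase h1]

lemma swp_eq_up {n a j : ℕ} (hjn : j < n) (s : BS n a) (h : j - 1 ∈ s.1 ∧ j ∉ s.1) :
    swp n a j hjn s = ⟨insert j (s.1.erase (j-1)), memU j hjn s h⟩ := by
  simp only [swp]
  rw [dif_pos h]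

lemma swp_eq_dn {n a j : ℕ} (hjn : j < n) (s : BS n a) (h : ¬(j - 1 ∈ s.1 ∧ j ∉ s.1))
    (h' : j ∈ s.1 ∧ j - 1 ∉ s.1) :
    swp n a j hjn s = ⟨insert (j-1) (s.1.erase j), memD j s h'⟩ := by
  simp only [swp]
  rw [dif_neg h, dif_pos h']

lemma swp_eq_self {n a j : ℕ} (hjn : j < n) (s : BS n a) (h : ¬(j - 1 ∈ s.1 ∧ j ∉ s.1))
    (h' : ¬(j ∈ s.1 ∧ j - 1 ∉ s.1)) :
    swp n a j hjn s = s := by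
  simp only [swp]
  rw [dif_neg h, dif_neg h']

lemma swp_invol (n a j : ℕ) (hj : 1 ≤ j) (hjn : j < n) :
    Function.Involutive (swp n a j hjn) := by
  intro s
  by_cases h : j - 1 ∈ s.1 ∧ j ∉ s.1
  · rw [swp_eq_up hjn s h]
    have hA : ¬ (j - 1 ∈ (insert j (s.1.erase (j-1))) ∧ j ∉ (insert j (s.1.erase (j-1)))) := by
      rintro ⟨-, hc⟩
      exact hc (Finset.mem_insert_self _ _)
    have hB : j ∈ (insert j (s.1.erase (j-1))) ∧ j - 1 ∉ (insert j (s.1.erase (j-1))) := by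
      refine ⟨Finset.mem_insert_self _ _, fun hc => ?_⟩
      rcases Finset.mem_insert.mp hc with hl | hl
      · omega
      · exact (Finset.mem_erase.mp hl).1 rfl
    rw [swp_eq_dn hjn _ hA hB]
    exact Subtype.ext (up_dn j hj s.1 h.1 h.2)
  · by_cases h' : j ∈ s.1 ∧ j - 1 ∉ s.1
    · rw [swp_eq_dn hjn s h h']
      have hA : j - 1 ∈ (insert (j-1) (s.1.erase j)) ∧ j ∉ (insert (j-1) (s.1.erase j)) := by
        refine ⟨Finset.mem_insert_self _ _, fun hc => ?_⟩
        rcases Finset.mem_insert.mp hc with hl | hl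
        · omega
        · exact (Finset.mem_erase.mp hl).1 rfl
      rw [swp_eq_up hjn _ hA]
      exact Subtype.ext (dn_up j hj s.1 h'.1 h'.2)
    · rw [swp_eq_self hjn s h h', swp_eq_self hjn s h h']

lemma cpl_up (n j : ℕ) (S : Finset ℕ) (hj : 1 ≤ j) (hjn : j < n) (h1 : j - 1 ∈ S)
    (h2 : j ∉ S) (hS : S ⊆ Finset.range n) :
    Finset.range n \ insert j (S.erase (j-1)) = insert (j-1) ((Finset.range n \ S).erase j) := by
  have hj1n : j - 1 < n := by omega
  ext x
  simp only [Finset.mem_sdiff, Finset.mem_insert, Finset.mem_erase, Finset.mem_range]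
  constructor
  · rintro ⟨hx, hx2⟩
    push_neg at hx2
    obtain ⟨hxj, hx3⟩ := hx2
    by_cases hxe : x = j - 1
    · exact Or.inl hxe
    · exact Or.inr ⟨hxj, hx, fun hSx => (hx3 hxe) hSx⟩
  · rintro (rfl | ⟨hxj, hxn, hxS⟩)
    · refine ⟨hj1n, ?_⟩
      push_neg
      exact ⟨by omega, fun hc => absurd rfl hc⟩
    · refine ⟨hxn, ?_⟩
      push_neg
      exact ⟨hxj, fun hne hc => hxS hc⟩

lemma cpl_dn (n j : ℕ) (S : Finset ℕ) (hj : 1 ≤ j) (hjn : j < n) (h1 : j ∈ S)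
    (h2 : j - 1 ∉ S) (hS : S ⊆ Finset.range n) :
    Finset.range n \ insert (j-1) (S.erase j) = insert j ((Finset.range n \ S).erase (j-1)) := by
  ext x
  simp only [Finset.mem_sdiff, Finset.mem_insert, Finset.mem_erase, Finset.mem_range]
  constructor
  · rintro ⟨hx, hx2⟩
    push_neg at hx2
    obtain ⟨hxj, hx3⟩ := hx2
    by_cases hxe : x = j
    · exact Or.inl hxe
    · exact Or.inr ⟨hxj, hx, (hx3 hxe)⟩
  · rintro (rfl | ⟨hxj, hxn, hxS⟩)
    · refine ⟨by omega, ?_⟩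
      push_neg
      exact ⟨by omega, fun hc => absurd rfl hc⟩
    · refine ⟨hxn, ?_⟩
      push_neg
      exact ⟨hxj, fun hne => hxS⟩

lemma dK_comm (n a j : ℕ) (ha : a ≤ n) (hj : 1 ≤ j) (hjn : j + 1 ≤ n) (v : V n a)
    (w : V n (n-a)) :
    dmap n a (n-a) (KOp n a j v) w = dmap n a (n-a) v (KinvOp n (n-a) j w) := by
  have hac : a + (n-a) = n := by omega
  have hjr : j < n := by omega
  have hj1r : j - 1 < n := by omega
  rw [dmap_apply n a (n-a) hac, dmap_apply n a (n-a) hac]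
  apply Finset.sum_congr rfl
  intro s _
  rw [KOp_apply n a j hj hjn, KinvOp_apply n (n-a) j hj hjn]
  have m1 : (j ∈ Finset.range n \ s.1) ↔ ¬ (j ∈ s.1) := by simp [hjr]
  have m2 : (j - 1 ∈ Finset.range n \ s.1) ↔ ¬ (j - 1 ∈ s.1) := by simp [hj1r]
  by_cases c1 : j ∈ s.1 <;> by_cases c2 : j - 1 ∈ s.1
  all_goals simp [c1, c2, m1, m2, mul_inv_cancel_left₀ qq_ne, inv_mul_cancel_left₀ qq_ne]
  all_goals try ring
  all_goals exact Or.inl trivial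

lemma dKinv_comm (n a j : ℕ) (ha : a ≤ n) (hj : 1 ≤ j) (hjn : j + 1 ≤ n) (v : V n a)
    (w : V n (n-a)) :
    dmap n a (n-a) (KinvOp n a j v) w = dmap n a (n-a) v (KOp n (n-a) j w) := by
  have hac : a + (n-a) = n := by omega
  have hjr : j < n := by omega
  have hj1r : j - 1 < n := by omega
  rw [dmap_apply n a (n-a) hac, dmap_apply n a (n-a) hac]
  apply Finset.sum_congr rfl
  intro s _
  rw [KinvOp_apply n a j hj hjn, KOp_apply n (n-a) j hj hjn]
  have m1 : (j ∈ Finset.range n \ s.1) ↔ ¬ (j ∈ s.1) := by simp [hjr]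
  have m2 : (j - 1 ∈ Finset.range n \ s.1) ↔ ¬ (j - 1 ∈ s.1) := by simp [hj1r]
  by_cases c1 : j ∈ s.1 <;> by_cases c2 : j - 1 ∈ s.1
  all_goals simp [c1, c2, m1, m2, mul_inv_cancel_left₀ qq_ne, inv_mul_cancel_left₀ qq_ne]
  all_goals try ring
  all_goals exact Or.inl trivial

lemma dXp_comm (n a j : ℕ) (ha : a ≤ n) (hj : 1 ≤ j) (hjn : j + 1 ≤ n) (v : V n a)
    (w : V n (n-a)) :
    dmap n a (n-a) (XpOp n a j v) w
      = -(dmap n a (n-a) v (XpOp n (n-a) j (KinvOp n (n-a) j w))) := by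
  have hac : a + (n-a) = n := by omega
  have hjr : j < n := by omega
  have hjj : j - 1 + 1 = j := by omega
  rw [dmap_apply n a (n-a) hac, dmap_apply n a (n-a) hac, ← Finset.sum_neg_distrib]
  rw [← Function.Bijective.sum_comp (swp_invol n a j hj hjr).bijective]
  apply Finset.sum_congr rfl
  intro s _
  by_cases c : j - 1 ∈ s.1 ∧ j ∉ s.1
  · rw [swp_eq_up hjr s c]
    rw [XpOp_apply n a j hj hjn, XpOp_apply n (n-a) j hj hjn]
    have hB : j ∈ (insert j (s.1.erase (j-1))) ∧ j - 1 ∉ (insert j (s.1.erase (j-1))) := by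
      refine ⟨Finset.mem_insert_self _ _, fun hc => ?_⟩
      rcases Finset.mem_insert.mp hc with hl | hl
      · omega
      · exact (Finset.mem_erase.mp hl).1 rfl
    have hC : j ∈ Finset.range n \ s.1 ∧ j - 1 ∉ Finset.range n \ s.1 :=
      ⟨Finset.mem_sdiff.mpr ⟨Finset.mem_range.mpr hjr, c.2⟩,
        fun hc => (Finset.mem_sdiff.mp hc).2 c.1⟩
    rw [dif_pos hB, dif_pos hC]
    rw [KinvOp_apply n (n-a) j hj hjn]
    have hD : j ∉ insert (j-1) ((Finset.range n \ s.1).erase j) := by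
      intro hc
      rcases Finset.mem_insert.mp hc with hl | hl
      · omega
      · exact (Finset.mem_erase.mp hl).1 rfl
    have hE : j - 1 ∈ insert (j-1) ((Finset.range n \ s.1).erase j) :=
      Finset.mem_insert_self _ _
    rw [if_neg hD, if_pos hE, one_mul]
    have hksw := kap_swap n (j-1) s.1 c.1 (by rw [hjj]; exact c.2) (by omega)
    rw [hjj] at hksw
    rw [hksw]
    have hv : insert (j-1) ((insert j (s.1.erase (j-1))).erase j) = s.1 :=
      up_dn j hj s.1 c.1 c.2
    have hw := cpl_up n j s.1 hj hjr c.1 c.2 s.2.1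
    simp only [hv, hw, Subtype.coe_eta]
    ring
  · by_cases c' : j ∈ s.1 ∧ j - 1 ∉ s.1
    · rw [swp_eq_dn hjr s c c']
      rw [XpOp_apply n a j hj hjn, XpOp_apply n (n-a) j hj hjn]
      have hD : ¬(j ∈ insert (j-1) (s.1.erase j) ∧ j - 1 ∉ insert (j-1) (s.1.erase j)) := by
        rintro ⟨hc, -⟩
        rcases Finset.mem_insert.mp hc with hl | hl
        · omega
        · exact (Finset.mem_erase.mp hl).1 rfl
      have hC : ¬(j ∈ Finset.range n \ s.1 ∧ j - 1 ∉ Finset.range n \ s.1) :=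
        fun hc => (Finset.mem_sdiff.mp hc.1).2 c'.1
      rw [dif_neg hD, dif_neg hC]
      simp
    · rw [swp_eq_self hjr s c c']
      rw [XpOp_apply n a j hj hjn, XpOp_apply n (n-a) j hj hjn]
      have hC : ¬(j ∈ Finset.range n \ s.1 ∧ j - 1 ∉ Finset.range n \ s.1) := by
        rintro ⟨hc, hc2⟩
        have h1 : j ∉ s.1 := (Finset.mem_sdiff.mp hc).2
        have h2 : j - 1 ∈ s.1 := by
          by_contra h3
          exact hc2 (Finset.mem_sdiff.mpr ⟨Finset.mem_range.mpr (by omega), h3⟩)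
        exact c ⟨h2, h1⟩
      rw [dif_neg c', dif_neg hC]
      simp

lemma dXm_comm (n a j : ℕ) (ha : a ≤ n) (hj : 1 ≤ j) (hjn : j + 1 ≤ n) (v : V n a)
    (w : V n (n-a)) :
    dmap n a (n-a) (XmOp n a j v) w
      = -(dmap n a (n-a) v (KOp n (n-a) j (XmOp n (n-a) j w))) := by
  have hac : a + (n-a) = n := by omega
  have hjr : j < n := by omega
  have hjj : j - 1 + 1 = j := by omega
  rw [dmap_apply n a (n-a) hac, dmap_apply n a (n-a) hac, ← Finset.sum_neg_distrib]
  rw [← Function.Bijective.sum_comp (swp_invol n a j hj hjr).bijective]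
  apply Finset.sum_congr rfl
  intro s _
  by_cases c : j - 1 ∈ s.1 ∧ j ∉ s.1
  · rw [swp_eq_up hjr s c]
    rw [XmOp_apply n a j hj hjn, KOp_apply n (n-a) j hj hjn, XmOp_apply n (n-a) j hj hjn]
    have hD : ¬(j - 1 ∈ insert j (s.1.erase (j-1)) ∧ j ∉ insert j (s.1.erase (j-1))) := by
      rintro ⟨-, hc⟩
      exact hc (Finset.mem_insert_self _ _)
    have hC : ¬(j - 1 ∈ Finset.range n \ s.1 ∧ j ∉ Finset.range n \ s.1) :=
      fun hc => (Finset.mem_sdiff.mp hc.1).2 c.1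
    rw [dif_neg hD, dif_neg hC]
    simp
  · by_cases c' : j ∈ s.1 ∧ j - 1 ∉ s.1
    · rw [swp_eq_dn hjr s c c']
      rw [XmOp_apply n a j hj hjn, KOp_apply n (n-a) j hj hjn, XmOp_apply n (n-a) j hj hjn]
      have hB : j - 1 ∈ (insert (j-1) (s.1.erase j)) ∧ j ∉ (insert (j-1) (s.1.erase j)) := by
        refine ⟨Finset.mem_insert_self _ _, fun hc => ?_⟩
        rcases Finset.mem_insert.mp hc with hl | hl
        · omega
        · exact (Finset.mem_erase.mp hl).1 rfl
      have hC : j - 1 ∈ Finset.range n \ s.1 ∧ j ∉ Finset.range n \ s.1 :=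
        ⟨Finset.mem_sdiff.mpr ⟨Finset.mem_range.mpr (by omega), c'.2⟩,
          fun hc => (Finset.mem_sdiff.mp hc).2 c'.1⟩
      rw [dif_pos hB, dif_pos hC]
      have mK1 : ¬ (j ∈ Finset.range n \ s.1) := fun hc => (Finset.mem_sdiff.mp hc).2 c'.1
      have mK2 : j - 1 ∈ Finset.range n \ s.1 := hC.1
      rw [if_neg mK1, if_pos mK2, one_mul]
      have hks : kap n s.1 = -qq * kap n (insert (j-1) (s.1.erase j)) := by
        have h1 : j - 1 ∈ insert (j-1) (s.1.erase j) := Finset.mem_insert_self _ _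
        have h2 : j ∉ insert (j-1) (s.1.erase j) := by
          intro hc
          rcases Finset.mem_insert.mp hc with hl | hl
          · omega
          · exact (Finset.mem_erase.mp hl).1 rfl
        have h3 := kap_swap n (j-1) (insert (j-1) (s.1.erase j)) h1
          (by rw [hjj]; exact h2) (by omega)
        rw [hjj, dn_up j hj s.1 c'.1 c'.2] at h3
        exact h3
      rw [hks]
      have hv : insert j ((insert (j-1) (s.1.erase j)).erase (j-1)) = s.1 :=
        dn_up j hj s.1 c'.1 c'.2
      have hw := cpl_dn n j s.1 hj hjr c'.1 c'.2 s.2.1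
      simp only [hv, hw, Subtype.coe_eta]
      have key : ∀ x y z : A, -((-qq * x) * (y * (qq⁻¹ * z))) = x * (y * z) := by
        intro x y z
        have h : -((-qq * x) * (y * (qq⁻¹ * z))) = (qq * qq⁻¹) * (x * (y * z)) := by ring
        rw [h, mul_inv_cancel₀ qq_ne, one_mul]
      rw [key]
    · rw [swp_eq_self hjr s c c']
      rw [XmOp_apply n a j hj hjn, KOp_apply n (n-a) j hj hjn, XmOp_apply n (n-a) j hj hjn]
      have hC : ¬(j - 1 ∈ Finset.range n \ s.1 ∧ j ∉ Finset.range n \ s.1) := by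
        rintro ⟨hc, hc2⟩
        have h1 : j - 1 ∉ s.1 := (Finset.mem_sdiff.mp hc).2
        have h2 : j ∈ s.1 := by
          by_contra h3
          exact hc2 (Finset.mem_sdiff.mpr ⟨Finset.mem_range.mpr hjr, h3⟩)
        exact c' ⟨h2, h1⟩
      rw [dif_neg c, dif_neg hC]
      simp

/-- the map `d_{a,n} : V_a^n → (V_{n-a}^n)^*` is `U_q(sl_n)`-equivariant:
`d_{a,n}(Z·v) = Z·d_{a,n}(v)` for all `Z ∈ U_q(sl_n)`, where `V_a^n` carries the recursively
defined action and `(V_{n-a}^n)^*` carries the antipode-twisted dual module structure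
(`Z·f = f ∘ S(Z)`, so the generators act by the dual maps appearing in the hypotheses on
`ρd` below). -/
theorem statement7 (n : ℕ) (hn : 1 ≤ n) (a : ℕ) (ha : a ≤ n)
    (ρ : Uq (n-1) →ₐ[A] Module.End A (V n a))
    (hρK : ∀ i : Fin (n-1), ρ (Uq.K i) = KOp n a ((i : ℕ)+1))
    (hρKinv : ∀ i : Fin (n-1), ρ (Uq.Kinv i) = KinvOp n a ((i : ℕ)+1))
    (hρXp : ∀ i : Fin (n-1), ρ (Uq.Xp i) = XpOp n a ((i : ℕ)+1))
    (hρXm : ∀ i : Fin (n-1), ρ (Uq.Xm i) = XmOp n a ((i : ℕ)+1))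
    (ρd : Uq (n-1) →ₐ[A] Module.End A (Module.Dual A (V n (n-a))))
    (hρdK : ∀ i : Fin (n-1),
      ρd (Uq.K i) = (KinvOp n (n-a) ((i : ℕ)+1)).dualMap)
    (hρdKinv : ∀ i : Fin (n-1),
      ρd (Uq.Kinv i) = (KOp n (n-a) ((i : ℕ)+1)).dualMap)
    (hρdXp : ∀ i : Fin (n-1),
      ρd (Uq.Xp i) = -(XpOp n (n-a) ((i : ℕ)+1) ∘ₗ KinvOp n (n-a) ((i : ℕ)+1)).dualMap)
    (hρdXm : ∀ i : Fin (n-1),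
      ρd (Uq.Xm i) = -(KOp n (n-a) ((i : ℕ)+1) ∘ₗ XmOp n (n-a) ((i : ℕ)+1)).dualMap) :
    ∀ (Z : Uq (n-1)) (v : V n a),
      dmap n a (n-a) (ρ Z v) = ρd Z (dmap n a (n-a) v) := by
  intro Z
  obtain ⟨x, rfl⟩ := RingQuot.mkAlgHom_surjective A (uqRel (n-1)) Z
  refine FreeAlgebra.induction A (UqGen (n-1))
    (motive := fun x => ∀ v, dmap n a (n-a) (ρ ((RingQuot.mkAlgHom A (uqRel (n-1))) x) v)
      = ρd ((RingQuot.mkAlgHom A (uqRel (n-1))) x) (dmap n a (n-a) v)) ?_ ?_ ?_ ?_ x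
  · intro r v
    rw [AlgHom.commutes, AlgHom.commutes, AlgHom.commutes,
      Module.algebraMap_end_apply, Module.algebraMap_end_apply, map_smul]
  · intro g
    rcases g with i | i | i | i
    · intro v
      rw [show (RingQuot.mkAlgHom A (uqRel (n-1))) (FreeAlgebra.ι A (UqGen.K i)) = Uq.K i
          from rfl, hρK i, hρdK i]
      have hj : 1 ≤ (i : ℕ) + 1 := by omega
      have hjn : (i : ℕ) + 1 + 1 ≤ n := by have := i.2; omega
      apply LinearMap.ext
      intro w
      rw [LinearMap.dualMap_apply]
      exact dK_comm n a ((i : ℕ)+1) ha hj hjn v _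
    · intro v
      rw [show (RingQuot.mkAlgHom A (uqRel (n-1))) (FreeAlgebra.ι A (UqGen.Kinv i)) = Uq.Kinv i
          from rfl, hρKinv i, hρdKinv i]
      have hj : 1 ≤ (i : ℕ) + 1 := by omega
      have hjn : (i : ℕ) + 1 + 1 ≤ n := by have := i.2; omega
      apply LinearMap.ext
      intro w
      rw [LinearMap.dualMap_apply]
      exact dKinv_comm n a ((i : ℕ)+1) ha hj hjn v _
    · intro v
      rw [show (RingQuot.mkAlgHom A (uqRel (n-1))) (FreeAlgebra.ι A (UqGen.Xp i)) = Uq.Xp i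
          from rfl, hρXp i, hρdXp i]
      have hj : 1 ≤ (i : ℕ) + 1 := by omega
      have hjn : (i : ℕ) + 1 + 1 ≤ n := by have := i.2; omega
      apply LinearMap.ext
      intro w
      rw [LinearMap.neg_apply, LinearMap.neg_apply, LinearMap.dualMap_apply,
        LinearMap.comp_apply]
      exact dXp_comm n a ((i : ℕ)+1) ha hj hjn v _
    · intro v
      rw [show (RingQuot.mkAlgHom A (uqRel (n-1))) (FreeAlgebra.ι A (UqGen.Xm i)) = Uq.Xm i
          from rfl, hρXm i, hρdXm i]
      have hj : 1 ≤ (i : ℕ) + 1 := by omega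
      have hjn : (i : ℕ) + 1 + 1 ≤ n := by have := i.2; omega
      apply LinearMap.ext
      intro w
      rw [LinearMap.neg_apply, LinearMap.neg_apply, LinearMap.dualMap_apply,
        LinearMap.comp_apply]
      exact dXm_comm n a ((i : ℕ)+1) ha hj hjn v _
  · intro x y hx hy v
    rw [map_mul, map_mul, map_mul, Module.End.mul_apply, Module.End.mul_apply, hx, hy]
  · intro x y hx hy v
    rw [map_add, map_add, map_add, LinearMap.add_apply, LinearMap.add_apply,
      map_add, hx, hy]

end
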